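/- Let a < h be real, let A ≥ 0 be real, and let u : [a, h] → ℂ be continuously differentiable. Then (1 + A²)^{1/2} |u(h)|² ≤ (1 + (h − a)^{-1}) (1 + A²) ∫_a^h |u(t)|² dt + ∫_a^h |u'(t)|² dt. -/

import Mathlib

open intervalIntegral Set

theorem stmt8 (a h A : ℝ) (hah : a < h) (hA : 0 ≤ A) (u u' : ℝ → ℂ)
    (hderiv : ∀ x ∈ Set.Icc a h, HasDerivAt u (u' x) x)
    (hcont : ContinuousOn u' (Set.Icc a h)) :
    Real.sqrt (1 + A ^ 2) * ‖u h‖ ^ 2 ≤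
      (1 + (h - a)⁻¹) * (1 + A ^ 2) * (∫ t in a..h, ‖u t‖ ^ 2) +
      ∫ t in a..h, ‖u' t‖ ^ 2 := by
  set B := Real.sqrt (1 + A ^ 2) with hBdef
  have hB2 : B ^ 2 = 1 + A ^ 2 := Real.sq_sqrt (by positivity)
  have hB1 : 1 ≤ B := by
    nlinarith [Real.sqrt_nonneg (1 + A ^ 2)]
  have hBpos : 0 < B := by linarith
  have hucont : ContinuousOn u (Set.Icc a h) := fun x hx =>
    (hderiv x hx).continuousAt.continuousWithinAt
  set φ : ℝ → ℝ := fun t => ‖u t‖ ^ 2 with hφdef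
  set g : ℝ → ℝ := fun t => 2 * ((u t).re * (u' t).re + (u t).im * (u' t).im) with hgdef
  set w : ℝ → ℝ := fun t => B * ‖u t‖ ^ 2 + B⁻¹ * ‖u' t‖ ^ 2 with hwdef
  have hφderiv : ∀ x ∈ Set.Icc a h, HasDerivAt φ (g x) x := by
    intro x hx
    have hre : HasDerivAt (fun t => (u t).re) ((u' x).re) x :=
      (Complex.reCLM.hasFDerivAt.comp_hasDerivAt x (hderiv x hx))
    have him : HasDerivAt (fun t => (u t).im) ((u' x).im) x :=
      (Complex.imCLM.hasFDerivAt.comp_hasDerivAt x (hderiv x hx))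
    have : HasDerivAt (fun t => (u t).re * (u t).re + (u t).im * (u t).im)
        ((u' x).re * (u x).re + (u x).re * (u' x).re +
          ((u' x).im * (u x).im + (u x).im * (u' x).im)) x := (hre.mul hre).add (him.mul him)
    convert this using 1
    · funext t
      simp only [hφdef, Complex.sq_norm, Complex.normSq_apply]
    · simp [hgdef]; ring
  have habs : ContinuousOn (fun t => ‖u t‖ ^ 2) (Set.Icc a h) :=
    (continuous_norm.comp_continuousOn hucont).pow 2
  have habs' : ContinuousOn (fun t => ‖u' t‖ ^ 2) (Set.Icc a h) :=
    (continuous_norm.comp_continuousOn hcont).pow 2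
  have hφcont : ContinuousOn φ (Set.Icc a h) := habs
  have hgcont : ContinuousOn g (Set.Icc a h) := by
    apply ContinuousOn.mul continuousOn_const
    exact ((Complex.continuous_re.comp_continuousOn hucont).mul
        (Complex.continuous_re.comp_continuousOn hcont)).add
      ((Complex.continuous_im.comp_continuousOn hucont).mul
        (Complex.continuous_im.comp_continuousOn hcont))
  have hwcont : ContinuousOn w (Set.Icc a h) :=
    (habs.const_smul B).add (habs'.const_smul B⁻¹)
  have hgw : ∀ s ∈ Set.Icc a h, g s ≤ w s := by
    intro s _
    have key2 : ∀ p q : ℝ, 2 * (p * q) ≤ B * p ^ 2 + B⁻¹ * q ^ 2 := by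
      intro p q
      rw [← sub_nonneg]
      have heq : B * p ^ 2 + B⁻¹ * q ^ 2 - 2 * (p * q) = B⁻¹ * (B * p - q) ^ 2 := by
        field_simp; ring
      rw [heq]; positivity
    simp only [hgdef, hwdef, Complex.sq_norm, Complex.normSq_apply]
    nlinarith [key2 (u s).re (u' s).re, key2 (u s).im (u' s).im]
  have hwnonneg : ∀ s, 0 ≤ w s := by
    intro s; have := hBpos; positivity
  set C : ℝ := ∫ s in a..h, w s with hCdef
  have hwint : IntervalIntegrable w MeasureTheory.volume a h :=
    (hwcont.mono (by rw [Set.uIcc_of_le hah.le])).intervalIntegrable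
  have key : ∀ t ∈ Set.Icc a h, φ h ≤ φ t + C := by
    intro t ht
    have hsub : Set.uIcc t h ⊆ Set.Icc a h := by
      rw [Set.uIcc_of_le ht.2]
      exact Set.Icc_subset_Icc ht.1 le_rfl
    have heq : (∫ s in t..h, g s) = φ h - φ t :=
      intervalIntegral.integral_eq_sub_of_hasDerivAt
        (fun x hx => hφderiv x (hsub hx))
        ((hgcont.mono hsub).intervalIntegrable)
    have hgint : IntervalIntegrable g MeasureTheory.volume t h :=
      (hgcont.mono hsub).intervalIntegrable
    have hwint' : IntervalIntegrable w MeasureTheory.volume t h :=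
      (hwcont.mono hsub).intervalIntegrable
    have hsub2 : Set.uIcc a t ⊆ Set.Icc a h := by
      rw [Set.uIcc_of_le ht.1]
      exact Set.Icc_subset_Icc le_rfl ht.2
    have hwint'' : IntervalIntegrable w MeasureTheory.volume a t :=
      (hwcont.mono hsub2).intervalIntegrable
    have h1 : (∫ s in t..h, g s) ≤ ∫ s in t..h, w s := by
      apply intervalIntegral.integral_mono_on ht.2 hgint hwint'
      intro s hs
      exact hgw s ⟨le_trans ht.1 hs.1, hs.2⟩
    have h2 : (∫ s in t..h, w s) ≤ C := by
      rw [hCdef, ← intervalIntegral.integral_add_adjacent_intervals hwint'' hwint']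
      have : 0 ≤ ∫ s in a..t, w s :=
        intervalIntegral.integral_nonneg ht.1 (fun s _ => hwnonneg s)
      linarith
    linarith [heq ▸ (h1.trans h2)]
  have hφint : IntervalIntegrable φ MeasureTheory.volume a h :=
    (hφcont.mono (by rw [Set.uIcc_of_le hah.le])).intervalIntegrable
  have hmain : (h - a) * (φ h - C) ≤ ∫ t in a..h, φ t := by
    have := intervalIntegral.integral_mono_on hah.le
      (_root_.intervalIntegrable_const (c := φ h - C)) hφint
      (fun t ht => by linarith [key t ht])
    simp only [intervalIntegral.integral_const, smul_eq_mul] at this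
    linarith
  have hφnonneg : (0:ℝ) ≤ ∫ t in a..h, φ t :=
    intervalIntegral.integral_nonneg hah.le (fun t _ => by positivity)
  have hu'int : IntervalIntegrable (fun t => ‖u' t‖ ^ 2) MeasureTheory.volume a h :=
    (habs'.mono (by rw [Set.uIcc_of_le hah.le])).intervalIntegrable
  have huint2 : IntervalIntegrable (fun t => ‖u t‖ ^ 2) MeasureTheory.volume a h := hφint
  have hCval : C = B * (∫ t in a..h, ‖u t‖ ^ 2) +
      B⁻¹ * ∫ t in a..h, ‖u' t‖ ^ 2 := by
    rw [hCdef, hwdef]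
    rw [intervalIntegral.integral_add (huint2.const_mul B) (hu'int.const_mul B⁻¹),
      intervalIntegral.integral_const_mul, intervalIntegral.integral_const_mul]
  have hu'nonneg : (0:ℝ) ≤ ∫ t in a..h, ‖u' t‖ ^ 2 :=
    intervalIntegral.integral_nonneg hah.le (fun t _ => by positivity)
  -- from hmain : (h-a) φh ≤ ∫φ + (h-a) C
  have hpos : 0 < h - a := by linarith
  have hstep : φ h ≤ (h - a)⁻¹ * (∫ t in a..h, φ t) + C := by
    have h1 : φ h - C ≤ (h - a)⁻¹ * ∫ t in a..h, φ t := by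
      rw [inv_mul_eq_div, le_div_iff₀ hpos]
      nlinarith [hmain]
    linarith
  -- multiply by B
  have hφh0 : 0 ≤ φ h := by positivity
  have hBle : B ≤ B ^ 2 := by nlinarith
  have hBiB : B * B⁻¹ = 1 := mul_inv_cancel₀ hBpos.ne'
  have final : B * φ h ≤ B * ((h - a)⁻¹ * (∫ t in a..h, φ t) + C) :=
    mul_le_mul_of_nonneg_left hstep hBpos.le
  rw [hCval] at final
  have hinv : 0 ≤ (h - a)⁻¹ := by positivity
  calc B * ‖u h‖ ^ 2 = B * φ h := rfl
    _ ≤ B * ((h - a)⁻¹ * (∫ t in a..h, φ t) + (B * (∫ t in a..h, ‖u t‖ ^ 2) +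
        B⁻¹ * ∫ t in a..h, ‖u' t‖ ^ 2)) := final
    _ ≤ (1 + (h - a)⁻¹) * (1 + A ^ 2) * (∫ t in a..h, ‖u t‖ ^ 2) +
      ∫ t in a..h, ‖u' t‖ ^ 2 := by
        have hIφ : (∫ t in a..h, φ t) = ∫ t in a..h, ‖u t‖ ^ 2 := rfl
        rw [hIφ]
        nlinarith [mul_nonneg hinv hφnonneg, hφnonneg, hu'nonneg]
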